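/- Let D¹, D² be positive diagonal n×n matrices, B¹, B² irreducible nonnegative matrices, ε ≥ 0, and x̂¹ with 0 ≪ x̂¹ ≪ 1 the single-virus endemic equilibrium of virus 1 (so (-D¹ + (I-X̂¹)B¹)x̂¹ = 0). If s(-D¹ - D² + εX̂¹B²) > 0, then the block 2×2 Metzler matrix J̃ = [[-D² + (I-X̂¹)B² - εB̂¹, (I-X̂¹)B² + D¹],[εB̂¹ + εX̂¹B², -D¹ - D² + εX̂¹B²]], where B̂¹ = diag(B¹x̂¹), satisfies s(J̃) > 0 (i.e., J̃ is not Hurwitz). -/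

import Mathlib

open Matrix Polynomial

variable {m : Type*} [Fintype m] [DecidableEq m]

/-- Spectral abscissa: the largest real part among the (complex) eigenvalues. -/
noncomputable def specAbscissa (M : Matrix m m ℝ) : ℝ :=
  sSup {x : ℝ | ∃ μ ∈ M.charpoly.aroots ℂ, x = μ.re}

/-- Spectral radius: the largest modulus among the (complex) eigenvalues. -/
noncomputable def specRadius (M : Matrix m m ℝ) : ℝ :=
  sSup {x : ℝ | ∃ μ ∈ M.charpoly.aroots ℂ, x = ‖μ‖}

/-- A matrix is Metzler if all off-diagonal entries are nonnegative. -/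
def IsMetzler (A : Matrix m m ℝ) : Prop := ∀ i j, i ≠ j → 0 ≤ A i j

/-- A matrix is Hurwitz if all its eigenvalues have strictly negative real part. -/
def IsHurwitz (A : Matrix m m ℝ) : Prop := ∀ μ ∈ A.charpoly.aroots ℂ, μ.re < 0

/-- A matrix is irreducible if its associated digraph is strongly connected. -/
def IsIrreducibleMat (A : Matrix m m ℝ) : Prop :=
  ∀ i j : m, Relation.ReflTransGen (fun a b => A a b ≠ 0) i j



section PF
variable {n : ℕ} (Q : Matrix (Fin n) (Fin n) ℝ)

lemma onePlus_nonneg (hQ0 : ∀ i j, 0 ≤ Q i j) : ∀ i j, 0 ≤ (1 + Q) i j := by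
  intro i j
  rcases eq_or_ne i j with rfl | hne
  · simp only [Matrix.add_apply, Matrix.one_apply_eq]; linarith [hQ0 i i]
  · simp only [Matrix.add_apply, Matrix.one_apply_ne hne]; linarith [hQ0 i j]

lemma pow_entry_nonneg (hQ0 : ∀ i j, 0 ≤ Q i j) :
    ∀ (k : ℕ) (i j : Fin n), 0 ≤ ((1 + Q) ^ k) i j := by
  intro k
  induction k with
  | zero =>
    intro i j
    rcases eq_or_ne i j with rfl | hne
    · simp
    · simp [Matrix.one_apply_ne hne]
  | succ k ih =>
    intro i j
    rw [pow_succ, Matrix.mul_apply]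
    exact Finset.sum_nonneg fun a _ => mul_nonneg (ih i a) (onePlus_nonneg Q hQ0 a j)

lemma pow_diag_ge_one (hQ0 : ∀ i j, 0 ≤ Q i j) :
    ∀ (k : ℕ) (i : Fin n), 1 ≤ ((1 + Q) ^ k) i i := by
  intro k
  induction k with
  | zero => intro i; simp
  | succ k ih =>
    intro i
    rw [pow_succ, Matrix.mul_apply]
    have h1 : (1:ℝ) * 1 ≤ ((1 + Q) ^ k) i i * (1 + Q) i i := by
      apply mul_le_mul (ih i) _ (by norm_num) (le_trans zero_le_one (ih i))
      simp only [Matrix.add_apply, Matrix.one_apply_eq]; linarith [hQ0 i i]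
    calc (1:ℝ) = 1 * 1 := by ring
    _ ≤ ((1 + Q) ^ k) i i * (1 + Q) i i := h1
    _ ≤ ∑ a, ((1 + Q) ^ k) i a * (1 + Q) a i :=
        Finset.single_le_sum (f := fun a => ((1 + Q) ^ k) i a * (1 + Q) a i)
          (fun a _ => mul_nonneg (pow_entry_nonneg Q hQ0 k i a) (onePlus_nonneg Q hQ0 a i))
          (Finset.mem_univ i)

lemma pow_entry_mono (hQ0 : ∀ i j, 0 ≤ Q i j) {k l : ℕ} (hkl : k ≤ l) (i j : Fin n) :
    ((1 + Q) ^ k) i j ≤ ((1 + Q) ^ l) i j := by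
  have h : (1 + Q) ^ l = (1 + Q) ^ k * (1 + Q) ^ (l - k) := by
    rw [← pow_add]; congr 1; omega
  rw [h, Matrix.mul_apply]
  calc ((1 + Q) ^ k) i j = ((1 + Q) ^ k) i j * 1 := by ring
  _ ≤ ((1 + Q) ^ k) i j * ((1 + Q) ^ (l - k)) j j :=
      mul_le_mul_of_nonneg_left (pow_diag_ge_one Q hQ0 _ j) (pow_entry_nonneg Q hQ0 k i j)
  _ ≤ ∑ a, ((1 + Q) ^ k) i a * ((1 + Q) ^ (l - k)) a j :=
      Finset.single_le_sum (f := fun a => ((1 + Q) ^ k) i a * ((1 + Q) ^ (l - k)) a j)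
        (fun a _ => mul_nonneg (pow_entry_nonneg Q hQ0 k i a) (pow_entry_nonneg Q hQ0 _ a j))
        (Finset.mem_univ j)

lemma exists_pow_pos (hQ0 : ∀ i j, 0 ≤ Q i j)
    (hQirr : ∀ i j : Fin n, Relation.ReflTransGen (fun a b => Q a b ≠ 0) i j) :
    ∃ m : ℕ, ∀ i j, 0 < ((1 + Q) ^ m) i j := by
  have step : ∀ i j : Fin n, ∃ k : ℕ, 0 < ((1 + Q) ^ k) i j := by
    intro i j
    induction hQirr i j with
    | refl => exact ⟨0, by simp⟩
    | @tail b c h hQbc ih =>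
      obtain ⟨k, hk⟩ := ih
      refine ⟨k + 1, ?_⟩
      rw [pow_succ, Matrix.mul_apply]
      have hbc : 0 < (1 + Q) b c := by
        rcases eq_or_ne b c with rfl | hne
        · simp only [Matrix.add_apply, Matrix.one_apply_eq]; linarith [hQ0 b b]
        · simp only [Matrix.add_apply, Matrix.one_apply_ne hne]
          rcases (hQ0 b c).lt_or_eq with h' | h'
          · linarith
          · exact absurd h'.symm hQbc
      calc (0:ℝ) < ((1 + Q) ^ k) i b * (1 + Q) b c := mul_pos hk hbc
      _ ≤ ∑ a, ((1 + Q) ^ k) i a * (1 + Q) a c :=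
          Finset.single_le_sum (f := fun a => ((1 + Q) ^ k) i a * (1 + Q) a c)
            (fun a _ => mul_nonneg (pow_entry_nonneg Q hQ0 k i a) (onePlus_nonneg Q hQ0 a c))
            (Finset.mem_univ b)
  choose f hf using fun p : Fin n × Fin n => step p.1 p.2
  refine ⟨Finset.univ.sup f, fun i j => ?_⟩
  exact lt_of_lt_of_le (hf (i, j))
    (pow_entry_mono Q hQ0 (Finset.le_sup (Finset.mem_univ (i, j))) i j)

end PF

section Key
variable {n : ℕ}

lemma key (Q : Matrix (Fin n) (Fin n) ℝ)
    (hQ0 : ∀ i j, 0 ≤ Q i j)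
    (hQirr : ∀ i j : Fin n, Relation.ReflTransGen (fun a b => Q a b ≠ 0) i j)
    (r : ℝ) (hr : 0 ≤ r) (u : Fin n → ℝ) (hu0 : ∀ i, 0 ≤ u i) (hune : u ≠ 0)
    (hru : ∀ i, r * u i ≤ Q.mulVec u i) :
    ∃ t : ℝ, r ≤ t ∧ ∃ w : Fin n → ℝ, w ≠ 0 ∧ Q.mulVec w = t • w := by
  classical
  set C : ℝ := ∑ i, ∑ j, Q i j with hC
  set K : Set (ℝ × (Fin n → ℝ)) :=
    {p | p.1 ∈ Set.Icc 0 C ∧ (∀ i, 0 ≤ p.2 i) ∧ (∑ i, p.2 i) = 1 ∧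
      ∀ i, p.1 * p.2 i ≤ Q.mulVec p.2 i} with hK
  -- normalization lemma
  have memK : ∀ t : ℝ, 0 ≤ t → ∀ z : Fin n → ℝ, (∀ i, 0 ≤ z i) → z ≠ 0 →
      (∀ i, t * z i ≤ Q.mulVec z i) → (t, (∑ i, z i)⁻¹ • z) ∈ K := by
    intro t ht z hz0 hzne htz
    obtain ⟨i0, hi0⟩ : ∃ i0, z i0 ≠ 0 := by
      by_contra hcon
      push_neg at hcon
      exact hzne (funext fun i => hcon i)
    have hs : 0 < ∑ i, z i :=
      Finset.sum_pos' (fun i _ => hz0 i) ⟨i0, Finset.mem_univ i0, (hz0 i0).lt_of_ne (Ne.symm hi0)⟩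
    set s := ∑ i, z i
    set w : Fin n → ℝ := s⁻¹ • z with hw
    have hw0 : ∀ i, 0 ≤ w i := fun i => mul_nonneg (inv_nonneg.2 hs.le) (hz0 i)
    have hwsum : ∑ i, w i = 1 := by
      simp only [hw, Pi.smul_apply, smul_eq_mul, ← Finset.mul_sum]
      exact inv_mul_cancel₀ hs.ne'
    have hwle : ∀ i, t * w i ≤ Q.mulVec w i := by
      intro i
      have : Q.mulVec w = s⁻¹ • Q.mulVec z := by
        rw [hw, Matrix.mulVec_smul]
      rw [this]
      simp only [hw, Pi.smul_apply, smul_eq_mul]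
      have := mul_le_mul_of_nonneg_left (htz i) (inv_nonneg.2 hs.le)
      calc t * (s⁻¹ * z i) = s⁻¹ * (t * z i) := by ring
      _ ≤ s⁻¹ * Q.mulVec z i := this
    have hwone : ∀ i, w i ≤ 1 := by
      intro i
      rw [← hwsum]
      exact Finset.single_le_sum (f := fun i => w i) (fun j _ => hw0 j) (Finset.mem_univ i)
    have htC : t ≤ C := by
      have h1 : t = ∑ i, t * w i := by
        rw [← Finset.mul_sum, hwsum, mul_one]
      have h2 : ∑ i, t * w i ≤ ∑ i, Q.mulVec w i := Finset.sum_le_sum fun i _ => hwle i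
      have h3 : ∑ i, Q.mulVec w i ≤ C := by
        rw [hC]
        apply Finset.sum_le_sum
        intro i _
        simp only [Matrix.mulVec, dotProduct]
        apply Finset.sum_le_sum
        intro j _
        calc Q i j * w j ≤ Q i j * 1 := mul_le_mul_of_nonneg_left (hwone j) (hQ0 i j)
        _ = Q i j := mul_one _
      linarith
    exact ⟨⟨ht, htC⟩, hw0, hwsum, hwle⟩
  -- K is compact
  have hKclosed : IsClosed K := by
    have h1 : IsClosed {p : ℝ × (Fin n → ℝ) | p.1 ∈ Set.Icc 0 C} :=
      (isClosed_Icc).preimage continuous_fst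
    have h2 : IsClosed {p : ℝ × (Fin n → ℝ) | ∀ i, 0 ≤ p.2 i} := by
      have : {p : ℝ × (Fin n → ℝ) | ∀ i, 0 ≤ p.2 i} = ⋂ i, {p | 0 ≤ p.2 i} := by
        ext p; simp
      rw [this]
      exact isClosed_iInter fun i =>
        isClosed_le continuous_const ((continuous_apply i).comp continuous_snd)
    have h3 : IsClosed {p : ℝ × (Fin n → ℝ) | (∑ i, p.2 i) = 1} :=
      isClosed_eq (continuous_finset_sum _ fun i _ => (continuous_apply i).comp continuous_snd) continuous_const
    have h4 : IsClosed {p : ℝ × (Fin n → ℝ) | ∀ i, p.1 * p.2 i ≤ Q.mulVec p.2 i} := by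
      have : {p : ℝ × (Fin n → ℝ) | ∀ i, p.1 * p.2 i ≤ Q.mulVec p.2 i} =
          ⋂ i, {p | p.1 * p.2 i ≤ ∑ j, Q i j * p.2 j} := by
        ext p
        simp [Matrix.mulVec, dotProduct]
      rw [this]
      refine isClosed_iInter fun i => isClosed_le ?_ ?_
      · exact continuous_fst.mul ((continuous_apply i).comp continuous_snd)
      · exact continuous_finset_sum _ fun j _ =>
          continuous_const.mul ((continuous_apply j).comp continuous_snd)
    have : K = _ ∩ (_ ∩ (_ ∩ _)) := rfl
    exact ((h1.inter (h2.inter (h3.inter h4))))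
  have hKsub : K ⊆ (Set.Icc (0:ℝ) C) ×ˢ (Set.Icc (0 : Fin n → ℝ) 1) := by
    rintro ⟨t, w⟩ ⟨ht, hw0, hwsum, _⟩
    refine ⟨ht, Pi.le_def.mpr fun i => hw0 i, Pi.le_def.mpr fun i => ?_⟩
    simp only [Pi.one_apply]
    calc w i ≤ ∑ j, w j :=
      Finset.single_le_sum (f := fun i => w i) (fun j _ => hw0 j) (Finset.mem_univ i)
    _ = 1 := hwsum
  have hKcompact : IsCompact K :=
    IsCompact.of_isClosed_subset (isCompact_Icc.prod isCompact_Icc) hKclosed hKsub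
  -- T
  set T : Set ℝ := Prod.fst '' K with hT
  have hTcompact : IsCompact T := hKcompact.image continuous_fst
  have hrT : r ∈ T := ⟨(r, (∑ i, u i)⁻¹ • u), memK r hr u hu0 hune hru, rfl⟩
  have hTne : T.Nonempty := ⟨r, hrT⟩
  set t₀ : ℝ := sSup T with ht₀
  have ht₀T : t₀ ∈ T := hTcompact.sSup_mem hTne
  have hrt₀ : r ≤ t₀ := le_csSup hTcompact.bddAbove hrT
  obtain ⟨⟨t₁, w⟩, hKmem, hfst⟩ := ht₀T
  simp only at hfst
  subst hfst
  obtain ⟨htIcc, hw0, hwsum, hwle⟩ := hKmem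
  have hwne : w ≠ 0 := by
    intro hcon
    rw [hcon] at hwsum
    simp at hwsum
  set y : Fin n → ℝ := Q.mulVec w - t₀ • w with hy
  have hy0 : ∀ i, 0 ≤ y i := by
    intro i
    simp only [hy, Pi.sub_apply, Pi.smul_apply, smul_eq_mul]
    linarith [hwle i]
  by_cases hyz : y = 0
  · refine ⟨t₀, hrt₀, w, hwne, ?_⟩
    have := sub_eq_zero.mp hyz
    exact this
  · exfalso
    obtain ⟨m, hm⟩ := exists_pow_pos Q hQ0 hQirr
    set E : Matrix (Fin n) (Fin n) ℝ := (1 + Q) ^ m with hE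
    have hE0 : ∀ i j, 0 ≤ E i j := pow_entry_nonneg Q hQ0 m
    -- z positive
    obtain ⟨j0, hj0⟩ : ∃ j0, 0 < w j0 := by
      by_contra hcon
      push_neg at hcon
      exact hwne (funext fun i => le_antisymm (hcon i) (hw0 i))
    set z : Fin n → ℝ := E.mulVec w with hz
    have hzpos : ∀ i, 0 < z i := by
      intro i
      simp only [hz, Matrix.mulVec, dotProduct]
      calc (0:ℝ) < E i j0 * w j0 := mul_pos (hm i j0) hj0
      _ ≤ ∑ j, E i j * w j :=
          Finset.single_le_sum (f := fun j => E i j * w j)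
            (fun j _ => mul_nonneg (hE0 i j) (hw0 j)) (Finset.mem_univ j0)
    obtain ⟨j1, hj1⟩ : ∃ j1, 0 < y j1 := by
      by_contra hcon
      push_neg at hcon
      exact hyz (funext fun i => le_antisymm (hcon i) (hy0 i))
    set y' : Fin n → ℝ := E.mulVec y with hy'
    have hy'pos : ∀ i, 0 < y' i := by
      intro i
      simp only [hy', Matrix.mulVec, dotProduct]
      calc (0:ℝ) < E i j1 * y j1 := mul_pos (hm i j1) hj1
      _ ≤ ∑ j, E i j * y j :=
          Finset.single_le_sum (f := fun j => E i j * y j)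
            (fun j _ => mul_nonneg (hE0 i j) (hy0 j)) (Finset.mem_univ j1)
    -- commute
    have hcomm : Q * E = E * Q := by
      have : Commute (1 + Q) Q := (Commute.one_left Q).add_left (Commute.refl Q)
      exact (this.pow_left m).symm
    have hQz : Q.mulVec z = t₀ • z + y' := by
      have h1 : Q.mulVec z = E.mulVec (Q.mulVec w) := by
        rw [hz, Matrix.mulVec_mulVec, hcomm, ← Matrix.mulVec_mulVec]
      have h2 : Q.mulVec w = t₀ • w + y := by
        rw [hy]; abel
      rw [h1, h2, Matrix.mulVec_add, Matrix.mulVec_smul]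
    -- epsilon
    have hnE : Nonempty (Fin n) := ⟨j0⟩
    set ε0 : ℝ := Finset.univ.inf' Finset.univ_nonempty (fun i => y' i / z i) with hε0
    have hε0pos : 0 < ε0 := by
      rw [hε0, Finset.lt_inf'_iff]
      exact fun i _ => div_pos (hy'pos i) (hzpos i)
    have hstep : ∀ i, (t₀ + ε0) * z i ≤ Q.mulVec z i := by
      intro i
      have h1 : ε0 ≤ y' i / z i := Finset.inf'_le _ (Finset.mem_univ i)
      have h2 : ε0 * z i ≤ y' i := by
        rw [← le_div_iff₀ (hzpos i)] at *
        exact h1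
      have : Q.mulVec z i = t₀ * z i + y' i := by
        rw [hQz]; simp
      rw [this]
      ring_nf
      nlinarith
    have hzne : z ≠ 0 := by
      intro hcon
      have := hzpos j0
      rw [hcon] at this
      simp at this
    have ht₀ε : 0 ≤ t₀ + ε0 := by linarith [hr, hrt₀, hε0pos]
    have hmem := memK (t₀ + ε0) ht₀ε z (fun i => (hzpos i).le) hzne hstep
    have : t₀ + ε0 ∈ T := ⟨_, hmem, rfl⟩
    have := le_csSup hTcompact.bddAbove this
    rw [← ht₀] at this
    linarith
end Key


lemma charpoly_eval_eq {k : Type*} [Fintype k] [DecidableEq k] {R : Type*} [CommRing R]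
    (M : Matrix k k R) (r : R) : M.charpoly.eval r = (Matrix.scalar k r - M).det := by
  rw [Matrix.charpoly, eval_det, Matrix.matPolyEquiv_charmatrix]
  simp

lemma scalar_eq_smul_one {k : Type*} [Fintype k] [DecidableEq k] {R : Type*} [CommRing R] (t : R) :
    Matrix.scalar k t = t • (1 : Matrix k k R) := by
  rw [Matrix.scalar_apply, Matrix.smul_one_eq_diagonal]

lemma scalar_mulVec {k : Type*} [Fintype k] [DecidableEq k] {R : Type*} [CommRing R] (t : R)
    (v : k → R) : (Matrix.scalar k t).mulVec v = t • v := by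
  rw [scalar_eq_smul_one, Matrix.smul_mulVec, Matrix.one_mulVec]

lemma det_blocks {n : ℕ} (A B C D : Matrix (Fin n) (Fin n) ℝ)
    (h0 : A - B + (C - D) = 0) (t : ℝ) :
    (Matrix.scalar _ t - Matrix.fromBlocks A B C D).det
      = (Matrix.scalar _ t - (A - B)).det * (Matrix.scalar _ t - (B + D)).det := by
  set T : Matrix (Fin n ⊕ Fin n) (Fin n ⊕ Fin n) ℝ := fromBlocks 1 0 (-1) 1 with hT
  set T' : Matrix (Fin n ⊕ Fin n) (Fin n ⊕ Fin n) ℝ := fromBlocks 1 0 1 1 with hT'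
  have hTT : T' * T = 1 := by
    rw [hT, hT', fromBlocks_multiply]
    simp [← fromBlocks_one]
  set W11 := Matrix.scalar (Fin n) t - A with hW11
  set W22 := Matrix.scalar (Fin n) t - D with hW22
  have hW : Matrix.scalar _ t - Matrix.fromBlocks A B C D
      = fromBlocks W11 (-B) (-C) W22 := by
    rw [scalar_eq_smul_one, ← fromBlocks_one, fromBlocks_smul, sub_eq_add_neg, fromBlocks_neg,
      fromBlocks_add]
    simp only [smul_zero, add_zero, zero_add, hW11, hW22, scalar_eq_smul_one, sub_eq_add_neg]
  have h21 : W11 + B + (-C - W22) = 0 := by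
    have h : W11 + B + (-C - W22) = -(A - B + (C - D)) := by
      rw [hW11, hW22]; abel
    rw [h, h0, neg_zero]
  have hconj : T' * ((fromBlocks W11 (-B) (-C) W22) * T)
      = fromBlocks (W11 + B) (-B) 0 (-B + W22) := by
    rw [hT, hT', fromBlocks_multiply, fromBlocks_multiply]
    refine fromBlocks_inj.mpr ⟨?_, ?_, ?_, ?_⟩ <;>
      simp only [Matrix.one_mul, Matrix.zero_mul, Matrix.mul_one, Matrix.mul_zero,
        Matrix.mul_neg, Matrix.neg_mul, neg_neg, add_zero, zero_add]
    rw [← h21]; abel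
  have h1 : T'.det * T.det = 1 := by rw [← Matrix.det_mul, hTT, Matrix.det_one]
  have hdet : (fromBlocks W11 (-B) (-C) W22).det
      = (fromBlocks (W11 + B) (-B) 0 (-B + W22)).det := by
    calc (fromBlocks W11 (-B) (-C) W22).det
        = (T'.det * T.det) * (fromBlocks W11 (-B) (-C) W22).det := by rw [h1, one_mul]
      _ = T'.det * ((fromBlocks W11 (-B) (-C) W22).det * T.det) := by ring
      _ = (T' * (fromBlocks W11 (-B) (-C) W22 * T)).det := by
          rw [Matrix.det_mul, Matrix.det_mul]
      _ = (fromBlocks (W11 + B) (-B) 0 (-B + W22)).det := by rw [hconj]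
  rw [hW, hdet, Matrix.det_fromBlocks_zero₂₁]
  congr 1
  · congr 1; rw [hW11]; abel
  · congr 1; rw [hW22]; abel

/-- If s(-D¹-D²+εX̂¹B²) > 0 then the Jacobian sub-block J̃ at the boundary equilibrium
(x̂¹,0,0) is not Hurwitz: s(J̃) > 0. -/
theorem jtilde_not_hurwitz_of_subblock_unstable
    {n : ℕ} (δ1 δ2 : Fin n → ℝ) (B1 B2 : Matrix (Fin n) (Fin n) ℝ) (ε : ℝ)
    (hδ1 : ∀ i, 0 < δ1 i) (hδ2 : ∀ i, 0 < δ2 i)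
    (hB1 : ∀ i j, 0 ≤ B1 i j) (hB2 : ∀ i j, 0 ≤ B2 i j)
    (hB1irr : IsIrreducibleMat B1) (hB2irr : IsIrreducibleMat B2)
    (hε : 0 ≤ ε)
    (x1 : Fin n → ℝ) (hx1 : ∀ i, 0 < x1 i ∧ x1 i < 1)
    (heq : (-(Matrix.diagonal δ1) + (1 - Matrix.diagonal x1) * B1).mulVec x1 = 0)
    (hunst : 0 < specAbscissa
      (-(Matrix.diagonal δ1) - Matrix.diagonal δ2
        + ε • (Matrix.diagonal x1 * B2))) :
    0 < specAbscissa (Matrix.fromBlocks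
      (-(Matrix.diagonal δ2) + (1 - Matrix.diagonal x1) * B2
        - ε • Matrix.diagonal (B1.mulVec x1))
      ((1 - Matrix.diagonal x1) * B2 + Matrix.diagonal δ1)
      (ε • Matrix.diagonal (B1.mulVec x1) + ε • (Matrix.diagonal x1 * B2))
      (-(Matrix.diagonal δ1) - Matrix.diagonal δ2
        + ε • (Matrix.diagonal x1 * B2))) := by
  classical
  set M : Matrix (Fin n) (Fin n) ℝ :=
    -(Matrix.diagonal δ1) - Matrix.diagonal δ2 + ε • (Matrix.diagonal x1 * B2) with hM
  set Am : Matrix (Fin n) (Fin n) ℝ :=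
    -(Matrix.diagonal δ2) + (1 - Matrix.diagonal x1) * B2
      - ε • Matrix.diagonal (B1.mulVec x1) with hAm
  set Bm : Matrix (Fin n) (Fin n) ℝ := (1 - Matrix.diagonal x1) * B2 + Matrix.diagonal δ1 with hBm
  set Cm : Matrix (Fin n) (Fin n) ℝ :=
    ε • Matrix.diagonal (B1.mulVec x1) + ε • (Matrix.diagonal x1 * B2) with hCm
  set N : Matrix (Fin n) (Fin n) ℝ := Bm + M with hN
  -- entry computations
  have hone : (1 - Matrix.diagonal x1 : Matrix (Fin n) (Fin n) ℝ)
      = Matrix.diagonal (fun i => 1 - x1 i) := by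
    rw [← Matrix.diagonal_one, ← Matrix.diagonal_sub]
  have hMapp : ∀ i j, M i j
      = -(if i = j then δ1 i else 0) - (if i = j then δ2 i else 0) + ε * (x1 i * B2 i j) := by
    intro i j
    simp only [hM, Matrix.add_apply, Matrix.sub_apply, Matrix.neg_apply, Matrix.smul_apply,
      Matrix.diagonal_apply, Matrix.diagonal_mul, smul_eq_mul]
  have hBmapp : ∀ i j, Bm i j = (1 - x1 i) * B2 i j + (if i = j then δ1 i else 0) := by
    intro i j
    simp only [hBm, hone, Matrix.add_apply, Matrix.diagonal_mul, Matrix.diagonal_apply]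
  have hBm0 : ∀ i j, 0 ≤ Bm i j := by
    intro i j
    rw [hBmapp]
    have h1 : 0 ≤ (1 - x1 i) * B2 i j :=
      mul_nonneg (by linarith [(hx1 i).2]) (hB2 i j)
    have h2 : (0:ℝ) ≤ if i = j then δ1 i else 0 := by
      split
      · exact (hδ1 i).le
      · exact le_rfl
    linarith
  -- the shift constant
  set c : ℝ := ∑ i, (δ1 i + δ2 i) with hc
  have hcle : ∀ i, δ1 i + δ2 i ≤ c := by
    intro i
    exact Finset.single_le_sum (f := fun i => δ1 i + δ2 i)
      (fun j _ => by simpa using (by linarith [hδ1 j, hδ2 j] : (0:ℝ) ≤ δ1 j + δ2 j))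
      (Finset.mem_univ i)
  have hc0 : 0 ≤ c :=
    Finset.sum_nonneg fun i _ => by
      simpa using (by linarith [hδ1 i, hδ2 i] : (0:ℝ) ≤ δ1 i + δ2 i)
  set P : Matrix (Fin n) (Fin n) ℝ := M + c • 1 with hP
  set Q : Matrix (Fin n) (Fin n) ℝ := N + c • 1 with hQ
  have hPapp : ∀ i j, P i j = M i j + (if i = j then c else 0) := by
    intro i j
    simp only [hP, Matrix.add_apply, Matrix.smul_apply, Matrix.one_apply, smul_eq_mul]
    split <;> simp
  have hQapp : ∀ i j, Q i j = N i j + (if i = j then c else 0) := by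
    intro i j
    simp only [hQ, Matrix.add_apply, Matrix.smul_apply, Matrix.one_apply, smul_eq_mul]
    split <;> simp
  have hP0 : ∀ i j, 0 ≤ P i j := by
    intro i j
    rw [hPapp, hMapp]
    have hx := hx1 i
    have hB := hB2 i j
    rcases eq_or_ne i j with rfl | hne
    · simp only [eq_self_iff_true, if_true]
      have := hcle i
      nlinarith [mul_nonneg (mul_nonneg hε hx.1.le) hB]
    · simp only [if_neg hne]
      nlinarith [mul_nonneg (mul_nonneg hε hx.1.le) hB]
  have hPQ : ∀ i j, P i j ≤ Q i j := by
    intro i j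
    rw [hPapp, hQapp, hN]
    have := hBm0 i j
    simp only [Matrix.add_apply]
    linarith
  have hQ0 : ∀ i j, 0 ≤ Q i j := fun i j => le_trans (hP0 i j) (hPQ i j)
  -- irreducibility of Q
  have hQirr : ∀ i j : Fin n, Relation.ReflTransGen (fun a b => Q a b ≠ 0) i j := by
    intro i j
    induction hB2irr i j with
    | refl => exact Relation.ReflTransGen.refl
    | @tail b cc h hbc ih =>
      rcases eq_or_ne b cc with rfl | hne
      · exact ih
      · refine Relation.ReflTransGen.tail ih ?_
        have hBpos : 0 < B2 b cc := (hB2 b cc).lt_of_ne (Ne.symm hbc)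
        have hx := hx1 b
        have : 0 < Q b cc := by
          rw [hQapp, if_neg hne, hN]
          simp only [Matrix.add_apply]
          rw [hBmapp, hMapp]
          simp only [if_neg hne]
          nlinarith [mul_nonneg (mul_nonneg hε hx.1.le) hBpos.le,
            mul_pos (by linarith [hx.2] : (0:ℝ) < 1 - x1 b) hBpos]
        exact this.ne'
  -- extract eigenvalue of M with positive real part
  rw [specAbscissa] at hunst
  obtain ⟨μ, hμroot, hμpos⟩ : ∃ μ ∈ M.charpoly.aroots ℂ, 0 < μ.re := by
    set S := {x : ℝ | ∃ μ ∈ M.charpoly.aroots ℂ, x = μ.re} with hS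
    have hfin : S.Finite := by
      have hsub : S ⊆ (fun μ : ℂ => μ.re) '' {μ | μ ∈ M.charpoly.aroots ℂ} := by
        rintro x ⟨μ, hμ, rfl⟩; exact ⟨μ, hμ, rfl⟩
      exact (Set.Finite.image _ (Multiset.finite_toSet _)).subset hsub
    rcases Set.eq_empty_or_nonempty S with he | hne
    · rw [he] at hunst; simp [Real.sSup_empty] at hunst
    · obtain ⟨μ, hμ, hx⟩ := hne.csSup_mem hfin
      exact ⟨μ, hμ, by rw [← hx]; exact hunst⟩
  -- eigenvector of M over ℂ
  have haev : (Polynomial.aeval μ) M.charpoly = 0 := (Polynomial.mem_aroots.mp hμroot).2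
  have hdet0 : (Matrix.scalar (Fin n) μ - M.map (algebraMap ℝ ℂ)).det = 0 := by
    have h2 : ((M.charpoly).map (algebraMap ℝ ℂ)).eval μ = 0 := by
      rw [Polynomial.eval_map, ← Polynomial.aeval_def]; exact haev
    rw [← Matrix.charpoly_map, charpoly_eval_eq] at h2
    exact h2
  obtain ⟨v, hvne, hv⟩ := Matrix.exists_mulVec_eq_zero_iff.mpr hdet0
  have hMv : (M.map (algebraMap ℝ ℂ)).mulVec v = μ • v := by
    rw [Matrix.sub_mulVec, scalar_mulVec] at hv
    exact (sub_eq_zero.mp hv).symm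
  -- Pc eigen equation
  have hmapone : ((c • 1 : Matrix (Fin n) (Fin n) ℝ).map (algebraMap ℝ ℂ))
      = (c : ℂ) • (1 : Matrix (Fin n) (Fin n) ℂ) := by
    ext i j
    simp only [Matrix.map_apply, Matrix.smul_apply, Matrix.one_apply, smul_eq_mul]
    split <;> simp
  have hPc : (P.map (algebraMap ℝ ℂ)).mulVec v = (μ + (c:ℂ)) • v := by
    have : P.map (algebraMap ℝ ℂ)
        = M.map (algebraMap ℝ ℂ) + (c : ℂ) • (1 : Matrix (Fin n) (Fin n) ℂ) := by
      rw [hP, Matrix.map_add _ (fun a b => by simp), hmapone]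
    rw [this, Matrix.add_mulVec, hMv, Matrix.smul_mulVec, Matrix.one_mulVec, add_smul]
  -- the nonnegative eigen-inequality data
  set u : Fin n → ℝ := fun i => ‖v i‖ with hu
  set r : ℝ := μ.re + c with hr
  have hrpos : 0 < r := by rw [hr]; linarith
  have hu0 : ∀ i, 0 ≤ u i := fun i => norm_nonneg _
  have hune : u ≠ 0 := by
    intro hcon
    apply hvne
    funext i
    have : u i = 0 := by rw [hcon]; rfl
    rw [hu] at this
    simpa using this
  have hru : ∀ i, r * u i ≤ Q.mulVec u i := by
    intro i
    have hstep1 : r * u i ≤ ‖μ + (c:ℂ)‖ * u i := by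
      apply mul_le_mul_of_nonneg_right _ (hu0 i)
      have h1 : (μ + (c:ℂ)).re = μ.re + c := by simp
      rw [hr, ← h1]
      exact Complex.re_le_norm _
    have hstep2 : ‖μ + (c:ℂ)‖ * u i
        = ‖(P.map (algebraMap ℝ ℂ)).mulVec v i‖ := by
      rw [hPc]
      simp only [Pi.smul_apply, smul_eq_mul, hu]
      exact (norm_mul _ _).symm
    have hstep3 : ‖(P.map (algebraMap ℝ ℂ)).mulVec v i‖ ≤ ∑ j, P i j * u j := by
      calc ‖(P.map (algebraMap ℝ ℂ)).mulVec v i‖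
          = ‖∑ j, (algebraMap ℝ ℂ) (P i j) * v j‖ := by
            simp only [Matrix.mulVec, dotProduct, Matrix.map_apply]
        _ ≤ ∑ j, ‖(algebraMap ℝ ℂ) (P i j) * v j‖ := norm_sum_le _ _
        _ = ∑ j, P i j * u j := by
            apply Finset.sum_congr rfl
            intro j _
            rw [norm_mul, hu]
            congr 1
            simpa using abs_of_nonneg (hP0 i j)
    have hstep4 : ∑ j, P i j * u j ≤ Q.mulVec u i := by
      simp only [Matrix.mulVec, dotProduct]
      exact Finset.sum_le_sum fun j _ => mul_le_mul_of_nonneg_right (hPQ i j) (hu0 j)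
    linarith
  -- apply the key Perron-type lemma
  obtain ⟨t, hrt, w, hwne, hQw⟩ := key Q hQ0 hQirr r hrpos.le u hu0 hune hru
  set t0 : ℝ := t - c with ht0
  have ht0pos : 0 < t0 := by rw [ht0]; rw [hr] at hrt; linarith
  have hNw : N.mulVec w = t0 • w := by
    have h1 : Q.mulVec w = N.mulVec w + c • w := by
      rw [hQ, Matrix.add_mulVec, Matrix.smul_mulVec, Matrix.one_mulVec]
    rw [h1] at hQw
    rw [ht0, sub_smul]
    rw [eq_sub_iff_add_eq]
    exact hQw
  have hdetN : (Matrix.scalar (Fin n) t0 - N).det = 0 := by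
    apply Matrix.exists_mulVec_eq_zero_iff.mp
    refine ⟨w, hwne, ?_⟩
    rw [Matrix.sub_mulVec, scalar_mulVec, hNw, sub_self]
  -- block identity
  have h0 : Am - Bm + (Cm - M) = 0 := by
    rw [hAm, hBm, hCm, hM]
    abel
  have hdetJ : ((Matrix.fromBlocks Am Bm Cm M).charpoly).eval t0 = 0 := by
    rw [charpoly_eval_eq, det_blocks Am Bm Cm M h0 t0, ← hN, hdetN, mul_zero]
  -- conclude
  rw [specAbscissa]
  have hmem : (t0 : ℂ) ∈ ((Matrix.fromBlocks Am Bm Cm M).charpoly).aroots ℂ := by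
    rw [Polynomial.mem_aroots]
    refine ⟨(Matrix.charpoly_monic _).ne_zero, ?_⟩
    have h1 : (t0 : ℂ) = algebraMap ℝ ℂ t0 := rfl
    rw [h1, Polynomial.aeval_algebraMap_apply]
    simp [Polynomial.aeval_def, Polynomial.eval₂_eq_eval_map, hdetJ]
  set SJ := {x : ℝ | ∃ μ ∈ ((Matrix.fromBlocks Am Bm Cm M).charpoly).aroots ℂ, x = μ.re} with hSJ
  have hfinJ : SJ.Finite := by
    have hsub : SJ ⊆ (fun μ : ℂ => μ.re) ''
        {μ | μ ∈ ((Matrix.fromBlocks Am Bm Cm M).charpoly).aroots ℂ} := by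
      rintro x ⟨μ, hμ, rfl⟩; exact ⟨μ, hμ, rfl⟩
    exact (Set.Finite.image _ (Multiset.finite_toSet _)).subset hsub
  have ht0mem : t0 ∈ SJ := ⟨(t0 : ℂ), hmem, by simp⟩
  have := le_csSup hfinJ.bddAbove ht0mem
  linarith
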